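/- Let n > k and m > k be positive integers, and let v^n and v^m be the Galerkin approximations of orders n and m respectively. Then for every t ≥ 0: |Σ_{i=1}^m λ_i² v^m_i(t)² − Σ_{i=1}^n λ_i² v^n_i(t)²| ≤ 2·(H₀/ν₁)^{1/2}·(Σ_{i=1}^k λ_i² (v^n_i(t) − v^m_i(t))²)^{1/2} + 2·R_k(a,b)·L_k^+(t), where L_k^+(t) = (ν₂/ν₁)·exp(L H₀ λ_k t / ν₁²) and H₀ = Σ_i b_i² + M(Σ_i λ_i² a_i²). -/

import Mathlib

open Filter Set

/-- Derivative from within the half line `[0, ∞)`. -/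
noncomputable def derIci (f : ℝ → ℝ) : ℝ → ℝ := derivWithin f (Set.Ici (0 : ℝ))

/-- The pair `(a, b)` belongs to the energy space `D(A^{1/2}) × H`. -/
def InEnergy (lam a b : ℕ → ℝ) : Prop :=
  Summable fun i => (b i) ^ 2 + (lam i) ^ 2 * (a i) ^ 2

/-- `R_k(a,b) = Σ_{i>k} (b_i² + λ_i² a_i²)`. -/
noncomputable def Rk (lam a b : ℕ → ℝ) (k : ℕ) : ℝ :=
  ∑' i : ℕ, if k < i then (b i) ^ 2 + (lam i) ^ 2 * (a i) ^ 2 else 0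

/-- Lacunary (spectral gap) data: `R_k(a,b)·k²·exp(k λ_k) ≤ 1` for infinitely many
positive integers `k`. -/
def Lacunary (lam a b : ℕ → ℝ) : Prop :=
  InEnergy lam a b ∧
    {k : ℕ | 0 < k ∧
      Rk lam a b k * (k : ℝ) ^ 2 * Real.exp ((k : ℝ) * lam k) ≤ 1}.Infinite

/-- `M(σ) = ∫₀^σ m(s) ds`. -/
noncomputable def Mfun (m : ℝ → ℝ) (σ : ℝ) : ℝ := ∫ s in (0:ℝ)..σ, m s

/-- The conserved quantity `H₀ = Σ_i b_i² + M(Σ_i λ_i² a_i²)`. -/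
noncomputable def H0 (lam : ℕ → ℝ) (m : ℝ → ℝ) (a b : ℕ → ℝ) : ℝ :=
  (∑' i, (b i) ^ 2) + Mfun m (∑' i, (lam i) ^ 2 * (a i) ^ 2)

/-- Galerkin approximation of order `n` (components of index `> n` extended by zero):
the solution of `v_i'' + m(Σ_{j≤n} λ_j² v_j²) λ_i² v_i = 0` for `i ≤ n`, with
`v_i(0) = a_i`, `v_i'(0) = b_i`. -/
def GalerkinSol (lam : ℕ → ℝ) (m : ℝ → ℝ) (a b : ℕ → ℝ) (n : ℕ)
    (v : ℕ → ℝ → ℝ) : Prop :=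
  (∀ i, ContDiffOn ℝ 2 (v i) (Set.Ici 0)) ∧
  (∀ i ≤ n, v i 0 = a i) ∧
  (∀ i ≤ n, derIci (v i) 0 = b i) ∧
  (∀ i, n < i → ∀ t, v i t = 0) ∧
  (∀ i ≤ n, ∀ t, 0 ≤ t →
    derIci (derIci (v i)) t
      + m (∑ j ∈ Finset.range (n + 1), (lam j) ^ 2 * (v j t) ^ 2)
        * (lam i) ^ 2 * v i t = 0)

/-- Global weak solution with initial data `(a,b)`: a family `v_i ∈ C²([0,∞))` with
`v_i(0) = a_i`, `v_i'(0) = b_i`, such that `Σ v_i'(t)²` and `Σ λ_i² v_i(t)²` converge,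
the maps `t ↦ (v_i'(t))_i` and `t ↦ (λ_i v_i(t))_i` are continuous from `[0,∞)` into
`ℓ²`, and `v_i'' + m(Σ_j λ_j² v_j²) λ_i² v_i = 0` for every `i` and every `t ≥ 0`. -/
def WeakSol (lam : ℕ → ℝ) (m : ℝ → ℝ) (a b : ℕ → ℝ) (v : ℕ → ℝ → ℝ) : Prop :=
  (∀ i, ContDiffOn ℝ 2 (v i) (Set.Ici 0)) ∧
  (∀ i, v i 0 = a i) ∧
  (∀ i, derIci (v i) 0 = b i) ∧
  (∀ t, 0 ≤ t → Summable fun i => (derIci (v i) t) ^ 2) ∧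
  (∀ t, 0 ≤ t → Summable fun i => (lam i) ^ 2 * (v i t) ^ 2) ∧
  (∀ t₀, 0 ≤ t₀ → Tendsto (fun t => ∑' i, (derIci (v i) t - derIci (v i) t₀) ^ 2)
      (nhdsWithin t₀ (Set.Ici 0)) (nhds 0)) ∧
  (∀ t₀, 0 ≤ t₀ → Tendsto (fun t => ∑' i, (lam i) ^ 2 * (v i t - v i t₀) ^ 2)
      (nhdsWithin t₀ (Set.Ici 0)) (nhds 0)) ∧
  (∀ i, ∀ t, 0 ≤ t →
    derIci (derIci (v i)) t
      + m (∑' j, (lam j) ^ 2 * (v j t) ^ 2) * (lam i) ^ 2 * v i t = 0)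

section aux
open intervalIntegral

/- ### M helper lemmas -/

lemma m_intble {m : ℝ → ℝ} (hm : ContinuousOn m (Set.Ici 0)) {x y : ℝ}
    (hx : 0 ≤ x) (hxy : x ≤ y) : IntervalIntegrable m MeasureTheory.volume x y := by
  apply ContinuousOn.intervalIntegrable
  apply hm.mono
  rw [uIcc_of_le hxy]
  exact fun s hs => le_trans hx hs.1

lemma mfun_diff_eq {m : ℝ → ℝ} (hm : ContinuousOn m (Set.Ici 0)) {x y : ℝ}
    (hx : 0 ≤ x) (hxy : x ≤ y) :
    Mfun m y - Mfun m x = ∫ s in x..y, m s := by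
  unfold Mfun
  rw [sub_eq_iff_eq_add']
  exact (integral_add_adjacent_intervals (m_intble hm le_rfl hx) (m_intble hm hx hxy)).symm

lemma mfun_diff_le {m : ℝ → ℝ} {μ₂ : ℝ} (hm : ContinuousOn m (Set.Ici 0))
    (hub : ∀ σ, 0 ≤ σ → m σ ≤ μ₂) {x y : ℝ} (hx : 0 ≤ x) (hxy : x ≤ y) :
    Mfun m y - Mfun m x ≤ μ₂ * (y - x) := by
  rw [mfun_diff_eq hm hx hxy]
  calc ∫ s in x..y, m s ≤ ∫ _ in x..y, μ₂ := by
        apply integral_mono_on hxy (m_intble hm hx hxy) intervalIntegrable_const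
        exact fun s hs => hub s (le_trans hx hs.1)
    _ = μ₂ * (y - x) := by simp [mul_comm]

lemma le_mfun_diff {m : ℝ → ℝ} {μ₁ : ℝ} (hm : ContinuousOn m (Set.Ici 0))
    (hlb : ∀ σ, 0 ≤ σ → μ₁ ≤ m σ) {x y : ℝ} (hx : 0 ≤ x) (hxy : x ≤ y) :
    μ₁ * (y - x) ≤ Mfun m y - Mfun m x := by
  rw [mfun_diff_eq hm hx hxy]
  calc μ₁ * (y - x) = ∫ _ in x..y, μ₁ := by simp [mul_comm]
    _ ≤ ∫ s in x..y, m s := by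
        apply integral_mono_on hxy intervalIntegrable_const (m_intble hm hx hxy)
        exact fun s hs => hlb s (le_trans hx hs.1)

lemma mfun_zero (m : ℝ → ℝ) : Mfun m 0 = 0 := integral_same

lemma mfun_hasDeriv {m : ℝ → ℝ} (hm : ContinuousOn m (Set.Ici 0)) {x : ℝ} (hx : 0 ≤ x) :
    HasDerivWithinAt (Mfun m) (m x) (Set.Ici 0) x := by
  set mt : ℝ → ℝ := fun s => m (max s 0) with hmt
  have hmtc : Continuous mt :=
    hm.comp_continuous (continuous_id.max continuous_const) (fun s => Set.mem_Ici.mpr (le_max_right _ _))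
  have h2 : HasDerivWithinAt (fun y => ∫ s in (0:ℝ)..y, mt s) (mt x) (Set.Ici 0) x :=
    (hmtc.integral_hasStrictDerivAt 0 x).hasDerivAt.hasDerivWithinAt
  have heq : ∀ u ∈ Set.Ici (0:ℝ), Mfun m u = ∫ s in (0:ℝ)..u, mt s := by
    intro u hu
    apply integral_congr
    intro s hs
    rw [uIcc_of_le hu] at hs
    simp [hmt, max_eq_left hs.1]
  have hx' : mt x = m x := by simp [hmt, max_eq_left hx]
  rw [← hx']
  exact h2.congr heq (heq x hx)

/- ### small algebra helpers -/

lemma alg1 {μ₁ A H : ℝ} (hμ : 0 < μ₁) (hA : 0 ≤ A) (hH : μ₁ * A ≤ H) :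
    2 * (Real.sqrt A * Real.sqrt (H - μ₁ * A)) ≤ H / Real.sqrt μ₁ := by
  have hs : 0 < Real.sqrt μ₁ := Real.sqrt_pos.mpr hμ
  set x := Real.sqrt (μ₁ * A) with hxdef
  set y := Real.sqrt (H - μ₁ * A) with hydef
  have hx2 : x ^ 2 = μ₁ * A := Real.sq_sqrt (by positivity)
  have hy2 : y ^ 2 = H - μ₁ * A := Real.sq_sqrt (by linarith)
  have h1 : Real.sqrt A = x / Real.sqrt μ₁ := by
    rw [hxdef, Real.sqrt_mul hμ.le, mul_div_cancel_left₀ _ (ne_of_gt hs)]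
  have h2 : 2 * x * y ≤ x ^ 2 + y ^ 2 := two_mul_le_add_sq x y
  calc 2 * (Real.sqrt A * y) = (2 * x * y) / Real.sqrt μ₁ := by rw [h1]; ring
    _ ≤ (x ^ 2 + y ^ 2) / Real.sqrt μ₁ := by
        exact div_le_div_of_nonneg_right h2 hs.le
    _ = H / Real.sqrt μ₁ := by rw [hx2, hy2]; ring

lemma min_le_sqrt {μ₁ : ℝ} (hμ : 0 < μ₁) : min 1 μ₁ ≤ Real.sqrt μ₁ := by
  rcases le_total 1 μ₁ with h | h
  · rw [min_eq_left h]
    exact Real.le_sqrt_of_sq_le (by nlinarith)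
  · rw [min_eq_right h]
    exact Real.le_sqrt_of_sq_le (by nlinarith)

/- ### summability helpers -/

lemma summI_b {lam a b : ℕ → ℝ} (hab : InEnergy lam a b) :
    Summable fun i => (b i) ^ 2 :=
  hab.of_nonneg_of_le (fun i => sq_nonneg _) (fun i => le_add_of_nonneg_right (by positivity))

lemma summI_a {lam a b : ℕ → ℝ} (hab : InEnergy lam a b) :
    Summable fun i => (lam i) ^ 2 * (a i) ^ 2 :=
  hab.of_nonneg_of_le (fun i => by positivity) (fun i => le_add_of_nonneg_left (by positivity))

lemma Rk_nonneg (lam a b : ℕ → ℝ) (k : ℕ) : 0 ≤ Rk lam a b k := by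
  apply tsum_nonneg
  intro i
  split <;> positivity

lemma H0_nonneg {lam : ℕ → ℝ} {μ₁ : ℝ} {m : ℝ → ℝ} {a b : ℕ → ℝ}
    (hm : ContinuousOn m (Set.Ici 0)) (hμ₁ : 0 < μ₁)
    (hm_lb : ∀ σ, 0 ≤ σ → μ₁ ≤ m σ) : 0 ≤ H0 lam m a b := by
  have h1 : (0:ℝ) ≤ ∑' i, (b i) ^ 2 := tsum_nonneg fun i => sq_nonneg _
  have h2 : (0:ℝ) ≤ ∑' i, (lam i) ^ 2 * (a i) ^ 2 := tsum_nonneg fun i => by positivity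
  have := le_mfun_diff hm hm_lb le_rfl h2
  rw [mfun_zero] at this
  unfold H0
  nlinarith

/- ### Galerkin derivative infrastructure -/

noncomputable def gsum (lam : ℕ → ℝ) (v : ℕ → ℝ → ℝ) (S : Finset ℕ) (s : ℝ) : ℝ :=
  ∑ j ∈ S, (lam j) ^ 2 * (v j s) ^ 2

noncomputable def gder (lam : ℕ → ℝ) (v : ℕ → ℝ → ℝ) (S : Finset ℕ) (s : ℝ) : ℝ :=
  ∑ j ∈ S, (lam j) ^ 2 * (2 * v j s * derIci (v j) s)

noncomputable def ksum (v : ℕ → ℝ → ℝ) (S : Finset ℕ) (s : ℝ) : ℝ :=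
  ∑ i ∈ S, (derIci (v i) s) ^ 2

lemma gsum_nonneg (lam : ℕ → ℝ) (v : ℕ → ℝ → ℝ) (S : Finset ℕ) (s : ℝ) :
    0 ≤ gsum lam v S s := Finset.sum_nonneg fun j _ => by positivity

lemma ksum_nonneg (v : ℕ → ℝ → ℝ) (S : Finset ℕ) (s : ℝ) :
    0 ≤ ksum v S s := Finset.sum_nonneg fun j _ => by positivity

lemma gsum_split (lam : ℕ → ℝ) (v : ℕ → ℝ → ℝ) {k n : ℕ} (hkn : k < n) (s : ℝ) :
    gsum lam v (Finset.range (n+1)) s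
      = gsum lam v (Finset.range (k+1)) s + gsum lam v (Finset.Ico (k+1) (n+1)) s := by
  unfold gsum
  simp only [Finset.range_eq_Ico]
  exact (Finset.sum_Ico_consecutive _ (Nat.zero_le _) (by omega)).symm

lemma gder_split (lam : ℕ → ℝ) (v : ℕ → ℝ → ℝ) {k n : ℕ} (hkn : k < n) (s : ℝ) :
    gder lam v (Finset.range (n+1)) s
      = gder lam v (Finset.range (k+1)) s + gder lam v (Finset.Ico (k+1) (n+1)) s := by
  unfold gder
  simp only [Finset.range_eq_Ico]
  exact (Finset.sum_Ico_consecutive _ (Nat.zero_le _) (by omega)).symm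

lemma ksum_split (v : ℕ → ℝ → ℝ) {k n : ℕ} (hkn : k < n) (s : ℝ) :
    ksum v (Finset.range (n+1)) s
      = ksum v (Finset.range (k+1)) s + ksum v (Finset.Ico (k+1) (n+1)) s := by
  unfold ksum
  simp only [Finset.range_eq_Ico]
  exact (Finset.sum_Ico_consecutive _ (Nat.zero_le _) (by omega)).symm

section deriv

variable {lam : ℕ → ℝ} {m : ℝ → ℝ} {a b : ℕ → ℝ} {n : ℕ} {v : ℕ → ℝ → ℝ}

lemma v_hasDeriv (hv : ∀ i, ContDiffOn ℝ 2 (v i) (Set.Ici 0)) (i : ℕ) {s : ℝ}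
    (hs : s ∈ Set.Ici (0:ℝ)) :
    HasDerivWithinAt (v i) (derIci (v i) s) (Set.Ici 0) s :=
  (((hv i).differentiableOn (by norm_num)) s hs).hasDerivWithinAt

lemma u_contDiff (hv : ∀ i, ContDiffOn ℝ 2 (v i) (Set.Ici 0)) (i : ℕ) :
    ContDiffOn ℝ 1 (derIci (v i)) (Set.Ici 0) :=
  (hv i).derivWithin (uniqueDiffOn_Ici 0) (by norm_num)

lemma u_hasDeriv (hv : ∀ i, ContDiffOn ℝ 2 (v i) (Set.Ici 0)) (i : ℕ) {s : ℝ}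
    (hs : s ∈ Set.Ici (0:ℝ)) :
    HasDerivWithinAt (derIci (v i)) (derIci (derIci (v i)) s) (Set.Ici 0) s :=
  (((u_contDiff hv i).differentiableOn one_ne_zero) s hs).hasDerivWithinAt

lemma u_hasDeriv_ode (hv : GalerkinSol lam m a b n v) {i : ℕ} (hi : i ≤ n) {s : ℝ}
    (hs : s ∈ Set.Ici (0:ℝ)) :
    HasDerivWithinAt (derIci (v i))
      (-(m (gsum lam v (Finset.range (n+1)) s) * (lam i) ^ 2 * v i s)) (Set.Ici 0) s := by
  have h := hv.2.2.2.2 i hi s hs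
  have heq : derIci (derIci (v i)) s
      = -(m (gsum lam v (Finset.range (n+1)) s) * (lam i) ^ 2 * v i s) := by
    unfold gsum; linarith
  exact heq ▸ u_hasDeriv hv.1 i hs

lemma gsum_hasDeriv (hv : ∀ i, ContDiffOn ℝ 2 (v i) (Set.Ici 0)) (S : Finset ℕ) {s : ℝ}
    (hs : s ∈ Set.Ici (0:ℝ)) :
    HasDerivWithinAt (gsum lam v S) (gder lam v S s) (Set.Ici 0) s := by
  unfold gsum gder
  apply HasDerivWithinAt.fun_sum
  intro j _
  have h2 := ((v_hasDeriv hv j hs).fun_pow 2).const_mul ((lam j) ^ 2)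
  refine h2.congr_deriv ?_
  norm_num

lemma ksum_hasDeriv (hv : GalerkinSol lam m a b n v) (S : Finset ℕ) (hS : ∀ i ∈ S, i ≤ n)
    {s : ℝ} (hs : s ∈ Set.Ici (0:ℝ)) :
    HasDerivWithinAt (ksum v S)
      (∑ i ∈ S, 2 * derIci (v i) s * (-(m (gsum lam v (Finset.range (n+1)) s) * (lam i) ^ 2 * v i s)))
      (Set.Ici 0) s := by
  unfold ksum
  apply HasDerivWithinAt.fun_sum
  intro i hi
  have h2 := (u_hasDeriv_ode hv (hS i hi) hs).fun_pow 2
  refine h2.congr_deriv ?_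
  norm_num

lemma mgsum_hasDeriv (hmc : ContinuousOn m (Set.Ici 0))
    (hv : ∀ i, ContDiffOn ℝ 2 (v i) (Set.Ici 0)) (S : Finset ℕ) {s : ℝ}
    (hs : s ∈ Set.Ici (0:ℝ)) :
    HasDerivWithinAt (fun r => Mfun m (gsum lam v S r))
      (m (gsum lam v S s) * gder lam v S s) (Set.Ici 0) s :=
  (mfun_hasDeriv hmc (gsum_nonneg lam v S s)).comp s (gsum_hasDeriv hv S hs)
    (fun r _ => gsum_nonneg lam v S r)

end deriv

section energy

variable {lam : ℕ → ℝ} {m : ℝ → ℝ} {a b : ℕ → ℝ} {n : ℕ} {v : ℕ → ℝ → ℝ}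

lemma energy_hasDeriv_zero (hmc : ContinuousOn m (Set.Ici 0)) (hv : GalerkinSol lam m a b n v)
    {s : ℝ} (hs : s ∈ Set.Ici (0:ℝ)) :
    HasDerivWithinAt
      (fun r => ksum v (Finset.range (n+1)) r + Mfun m (gsum lam v (Finset.range (n+1)) r))
      0 (Set.Ici 0) s := by
  have h1 := ksum_hasDeriv hv (Finset.range (n+1))
    (fun i hi => Finset.mem_range_succ_iff.mp hi) hs
  have h2 := mgsum_hasDeriv (lam := lam) hmc hv.1 (Finset.range (n+1)) hs
  have h3 := h1.add h2
  have he : (∑ i ∈ Finset.range (n+1), 2 * derIci (v i) s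
        * (-(m (gsum lam v (Finset.range (n+1)) s) * (lam i) ^ 2 * v i s)))
      + m (gsum lam v (Finset.range (n+1)) s) * gder lam v (Finset.range (n+1)) s = 0 := by
    unfold gder
    rw [Finset.mul_sum, ← Finset.sum_add_distrib]
    apply Finset.sum_eq_zero
    intro j _
    ring
  rwa [he] at h3

lemma const_on_Ici {f : ℝ → ℝ} (hf : ∀ s ∈ Set.Ici (0:ℝ), HasDerivWithinAt f 0 (Set.Ici 0) s) :
    ∀ t, 0 ≤ t → f t = f 0 := by
  intro t ht
  have hcont : ContinuousOn f (Set.Icc 0 t) :=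
    fun r hr => ((hf r hr.1).continuousWithinAt).mono Icc_subset_Ici_self
  exact constant_of_has_deriv_right_zero hcont
    (fun x hx => (hf x hx.1).mono (Ici_subset_Ici.mpr hx.1)) t ⟨ht, le_rfl⟩

lemma energy_conserved (hmc : ContinuousOn m (Set.Ici 0)) (hv : GalerkinSol lam m a b n v)
    {t : ℝ} (ht : 0 ≤ t) :
    ksum v (Finset.range (n+1)) t + Mfun m (gsum lam v (Finset.range (n+1)) t)
      = ksum v (Finset.range (n+1)) 0 + Mfun m (gsum lam v (Finset.range (n+1)) 0) :=
  const_on_Ici (fun s hs => energy_hasDeriv_zero hmc hv hs) t ht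

lemma F_hasDeriv (hmc : ContinuousOn m (Set.Ici 0)) (hv : GalerkinSol lam m a b n v)
    {k : ℕ} (hkn : k < n) {s : ℝ} (hs : s ∈ Set.Ici (0:ℝ)) :
    HasDerivWithinAt
      (fun r => ksum v (Finset.Ico (k+1) (n+1)) r
        + (Mfun m (gsum lam v (Finset.range (n+1)) r)
            - Mfun m (gsum lam v (Finset.range (k+1)) r)))
      ((m (gsum lam v (Finset.range (n+1)) s) - m (gsum lam v (Finset.range (k+1)) s))
        * gder lam v (Finset.range (k+1)) s) (Set.Ici 0) s := by
  have h1 := ksum_hasDeriv hv (Finset.Ico (k+1) (n+1))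
    (fun i hi => by
      have := (Finset.mem_Ico.mp hi).2
      omega) hs
  have h2 := mgsum_hasDeriv (lam := lam) hmc hv.1 (Finset.range (n+1)) hs
  have h3 := mgsum_hasDeriv (lam := lam) hmc hv.1 (Finset.range (k+1)) hs
  have h4 := h1.add (h2.sub h3)
  have hT : (∑ i ∈ Finset.Ico (k+1) (n+1), 2 * derIci (v i) s
        * (-(m (gsum lam v (Finset.range (n+1)) s) * (lam i) ^ 2 * v i s)))
      = -(m (gsum lam v (Finset.range (n+1)) s) * gder lam v (Finset.Ico (k+1) (n+1)) s) := by
    unfold gder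
    rw [Finset.mul_sum, ← Finset.sum_neg_distrib]
    apply Finset.sum_congr rfl
    intro j _
    ring
  have he : (∑ i ∈ Finset.Ico (k+1) (n+1), 2 * derIci (v i) s
        * (-(m (gsum lam v (Finset.range (n+1)) s) * (lam i) ^ 2 * v i s)))
      + (m (gsum lam v (Finset.range (n+1)) s) * gder lam v (Finset.range (n+1)) s
          - m (gsum lam v (Finset.range (k+1)) s) * gder lam v (Finset.range (k+1)) s)
      = (m (gsum lam v (Finset.range (n+1)) s) - m (gsum lam v (Finset.range (k+1)) s))
        * gder lam v (Finset.range (k+1)) s := by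
    rw [hT, gder_split lam v hkn s]
    ring
  rwa [he] at h4

end energy

set_option maxHeartbeats 1000000 in
lemma galerkin_bounds (lam : ℕ → ℝ) (hpos : ∀ i, 0 < lam i) (hmono : Monotone lam)
    (μ₁ μ₂ L : ℝ) (hμ₁ : 0 < μ₁) (hL : 0 < L) (m : ℝ → ℝ)
    (hm_reg : ContDiffOn ℝ 1 m (Set.Ici 0))
    (hm_lb : ∀ σ, 0 ≤ σ → μ₁ ≤ m σ) (hm_ub : ∀ σ, 0 ≤ σ → m σ ≤ μ₂)
    (hm_lip : ∀ σ₁ σ₂, 0 ≤ σ₁ → 0 ≤ σ₂ → |m σ₂ - m σ₁| ≤ L * |σ₂ - σ₁|)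
    (a b : ℕ → ℝ) (hab : InEnergy lam a b)
    (k n : ℕ) (hkn : k < n) (v : ℕ → ℝ → ℝ) (hv : GalerkinSol lam m a b n v) :
    ∀ t, 0 ≤ t →
      gsum lam v (Finset.range (n+1)) t ≤ H0 lam m a b / μ₁ ∧
      gsum lam v (Finset.Ico (k+1) (n+1)) t
        ≤ Rk lam a b k * ((max 1 μ₂ / min 1 μ₁)
            * Real.exp (L * H0 lam m a b * lam k * t / (min 1 μ₁) ^ 2)) := by
  have hmc : ContinuousOn m (Set.Ici 0) := hm_reg.continuousOn
  have hsb := summI_b hab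
  have hsa := summI_a hab
  have hH : 0 ≤ H0 lam m a b := H0_nonneg hmc hμ₁ hm_lb
  have hν₁pos : (0:ℝ) < min 1 μ₁ := lt_min one_pos hμ₁
  -- initial values
  have hk0 : ksum v (Finset.range (n+1)) 0 = ∑ i ∈ Finset.range (n+1), (b i) ^ 2 := by
    unfold ksum
    exact Finset.sum_congr rfl fun i hi => by
      rw [hv.2.2.1 i (Finset.mem_range_succ_iff.mp hi)]
  have hg0 : gsum lam v (Finset.range (n+1)) 0
      = ∑ i ∈ Finset.range (n+1), (lam i) ^ 2 * (a i) ^ 2 := by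
    unfold gsum
    exact Finset.sum_congr rfl fun i hi => by
      rw [hv.2.1 i (Finset.mem_range_succ_iff.mp hi)]
  have hble : ∑ i ∈ Finset.range (n+1), (b i) ^ 2 ≤ ∑' i, (b i) ^ 2 :=
    Summable.sum_le_tsum _ (fun i _ => sq_nonneg _) hsb
  have hale : ∑ i ∈ Finset.range (n+1), (lam i) ^ 2 * (a i) ^ 2
      ≤ ∑' i, (lam i) ^ 2 * (a i) ^ 2 :=
    Summable.sum_le_tsum _ (fun i _ => by positivity) hsa
  have hMmono : Mfun m (gsum lam v (Finset.range (n+1)) 0)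
      ≤ Mfun m (∑' i, (lam i) ^ 2 * (a i) ^ 2) := by
    have h1 : 0 ≤ gsum lam v (Finset.range (n+1)) 0 := gsum_nonneg _ _ _ _
    have h2 : gsum lam v (Finset.range (n+1)) 0 ≤ ∑' i, (lam i) ^ 2 * (a i) ^ 2 := by
      rw [hg0]; exact hale
    nlinarith [le_mfun_diff hmc hm_lb h1 h2]
  have hE0 : ksum v (Finset.range (n+1)) 0 + Mfun m (gsum lam v (Finset.range (n+1)) 0)
      ≤ H0 lam m a b := by
    unfold H0
    rw [hk0]
    linarith
  -- pointwise energy bounds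
  have hE : ∀ s, 0 ≤ s →
      ksum v (Finset.range (n+1)) s + Mfun m (gsum lam v (Finset.range (n+1)) s)
        ≤ H0 lam m a b := by
    intro s hs
    rw [energy_conserved hmc hv hs]
    exact hE0
  have hMlb : ∀ s : ℝ, μ₁ * gsum lam v (Finset.range (n+1)) s
      ≤ Mfun m (gsum lam v (Finset.range (n+1)) s) := by
    intro s
    have h := le_mfun_diff hmc hm_lb le_rfl (gsum_nonneg lam v (Finset.range (n+1)) s)
    rw [mfun_zero] at h
    nlinarith [h]
  have hσle : ∀ s, 0 ≤ s → gsum lam v (Finset.range (n+1)) s ≤ H0 lam m a b / μ₁ := by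
    intro s hs
    rw [le_div_iff₀ hμ₁]
    nlinarith [hE s hs, hMlb s, ksum_nonneg v (Finset.range (n+1)) s]
  have hKle : ∀ s, 0 ≤ s → ksum v (Finset.range (n+1)) s
      ≤ H0 lam m a b - μ₁ * gsum lam v (Finset.range (n+1)) s := by
    intro s hs
    nlinarith [hE s hs, hMlb s]
  have hAsub : ∀ s : ℝ, gsum lam v (Finset.range (k+1)) s
      ≤ gsum lam v (Finset.range (n+1)) s := by
    intro s
    rw [gsum_split lam v hkn s]
    linarith [gsum_nonneg lam v (Finset.Ico (k+1) (n+1)) s]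
  have hKlsub : ∀ s : ℝ, ksum v (Finset.range (k+1)) s ≤ ksum v (Finset.range (n+1)) s := by
    intro s
    rw [ksum_split v hkn s]
    linarith [ksum_nonneg v (Finset.Ico (k+1) (n+1)) s]
  -- bound on the derivative of the low-frequency part
  have hAd : ∀ s, 0 ≤ s → |gder lam v (Finset.range (k+1)) s|
      ≤ lam k * (H0 lam m a b / Real.sqrt μ₁) := by
    intro s hs
    have h1 : |gder lam v (Finset.range (k+1)) s|
        ≤ ∑ j ∈ Finset.range (k+1), 2 * lam k * (|lam j * v j s| * |derIci (v j) s|) := by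
      refine (Finset.abs_sum_le_sum_abs _ _).trans ?_
      apply Finset.sum_le_sum
      intro j hj
      have hjk : lam j ≤ lam k := hmono (Finset.mem_range_succ_iff.mp hj)
      have hj0 : 0 < lam j := hpos j
      have h2 : |lam j ^ 2 * (2 * v j s * derIci (v j) s)|
          = lam j ^ 2 * (2 * |v j s| * |derIci (v j) s|) := by
        rw [abs_mul, abs_mul, abs_mul, abs_pow, abs_of_pos hj0, abs_two]
      have h3 : |lam j * v j s| = lam j * |v j s| := by
        rw [abs_mul, abs_of_pos hj0]
      rw [h2, h3]
      nlinarith [mul_nonneg (mul_nonneg (mul_nonneg (sub_nonneg.mpr hjk) hj0.le)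
        (abs_nonneg (v j s))) (abs_nonneg (derIci (v j) s))]
    have hCS : (∑ j ∈ Finset.range (k+1), |lam j * v j s| * |derIci (v j) s|)
        ≤ Real.sqrt (gsum lam v (Finset.range (k+1)) s)
          * Real.sqrt (ksum v (Finset.range (k+1)) s) := by
      have h := Finset.sum_mul_sq_le_sq_mul_sq (Finset.range (k+1))
        (fun j => |lam j * v j s|) (fun j => |derIci (v j) s|)
      have hsq : ∑ j ∈ Finset.range (k+1), |lam j * v j s| ^ 2
          = gsum lam v (Finset.range (k+1)) s := by
        unfold gsum
        exact Finset.sum_congr rfl fun j _ => by rw [sq_abs, mul_pow]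
      have hsq2 : ∑ j ∈ Finset.range (k+1), |derIci (v j) s| ^ 2
          = ksum v (Finset.range (k+1)) s := by
        unfold ksum
        exact Finset.sum_congr rfl fun j _ => by rw [sq_abs]
      rw [hsq, hsq2] at h
      have hnn : 0 ≤ ∑ j ∈ Finset.range (k+1), |lam j * v j s| * |derIci (v j) s| :=
        Finset.sum_nonneg fun j _ => mul_nonneg (abs_nonneg _) (abs_nonneg _)
      calc (∑ j ∈ Finset.range (k+1), |lam j * v j s| * |derIci (v j) s|)
          = Real.sqrt ((∑ j ∈ Finset.range (k+1), |lam j * v j s| * |derIci (v j) s|) ^ 2) :=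
            (Real.sqrt_sq hnn).symm
        _ ≤ Real.sqrt (gsum lam v (Finset.range (k+1)) s * ksum v (Finset.range (k+1)) s) :=
            Real.sqrt_le_sqrt h
        _ = Real.sqrt (gsum lam v (Finset.range (k+1)) s)
            * Real.sqrt (ksum v (Finset.range (k+1)) s) :=
            Real.sqrt_mul (gsum_nonneg _ _ _ _) _
    have hKlA : ksum v (Finset.range (k+1)) s
        ≤ H0 lam m a b - μ₁ * gsum lam v (Finset.range (k+1)) s := by
      nlinarith [hKle s hs, hAsub s, hKlsub s]
    have hμA : μ₁ * gsum lam v (Finset.range (k+1)) s ≤ H0 lam m a b := by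
      nlinarith [hKlA, ksum_nonneg v (Finset.range (k+1)) s]
    have halg := alg1 hμ₁ (gsum_nonneg lam v (Finset.range (k+1)) s) hμA
    have hlamk : (0:ℝ) ≤ lam k := (hpos k).le
    calc |gder lam v (Finset.range (k+1)) s|
        ≤ ∑ j ∈ Finset.range (k+1), 2 * lam k * (|lam j * v j s| * |derIci (v j) s|) := h1
      _ = 2 * lam k * ∑ j ∈ Finset.range (k+1), |lam j * v j s| * |derIci (v j) s| := by
          rw [Finset.mul_sum]
      _ ≤ 2 * lam k * (Real.sqrt (gsum lam v (Finset.range (k+1)) s)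
            * Real.sqrt (ksum v (Finset.range (k+1)) s)) := by
          apply mul_le_mul_of_nonneg_left hCS (by positivity)
      _ ≤ 2 * lam k * (Real.sqrt (gsum lam v (Finset.range (k+1)) s)
            * Real.sqrt (H0 lam m a b - μ₁ * gsum lam v (Finset.range (k+1)) s)) := by
          apply mul_le_mul_of_nonneg_left
            (mul_le_mul_of_nonneg_left (Real.sqrt_le_sqrt hKlA) (Real.sqrt_nonneg _))
            (by positivity)
      _ = lam k * (2 * (Real.sqrt (gsum lam v (Finset.range (k+1)) s)
            * Real.sqrt (H0 lam m a b - μ₁ * gsum lam v (Finset.range (k+1)) s))) := by ring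
      _ ≤ lam k * (H0 lam m a b / Real.sqrt μ₁) := mul_le_mul_of_nonneg_left halg hlamk
  -- the tail functional F and its basic bounds
  have hFlb : ∀ s : ℝ, μ₁ * gsum lam v (Finset.Ico (k+1) (n+1)) s
      ≤ ksum v (Finset.Ico (k+1) (n+1)) s
        + (Mfun m (gsum lam v (Finset.range (n+1)) s)
            - Mfun m (gsum lam v (Finset.range (k+1)) s)) := by
    intro s
    have h1 := le_mfun_diff hmc hm_lb (gsum_nonneg lam v (Finset.range (k+1)) s) (hAsub s)
    have h2 := ksum_nonneg v (Finset.Ico (k+1) (n+1)) s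
    have h3 := gsum_split lam v hkn s
    have h4 : gsum lam v (Finset.range (n+1)) s - gsum lam v (Finset.range (k+1)) s
        = gsum lam v (Finset.Ico (k+1) (n+1)) s := by linarith
    rw [← h4]
    linarith [h1]
  have hFpos : ∀ s : ℝ, 0 ≤ ksum v (Finset.Ico (k+1) (n+1)) s
      + (Mfun m (gsum lam v (Finset.range (n+1)) s)
          - Mfun m (gsum lam v (Finset.range (k+1)) s)) := by
    intro s
    have := hFlb s
    nlinarith [gsum_nonneg lam v (Finset.Ico (k+1) (n+1)) s]
  -- initial bound for F
  have hB0a : gsum lam v (Finset.Ico (k+1) (n+1)) 0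
      = ∑ i ∈ Finset.Ico (k+1) (n+1), (lam i) ^ 2 * (a i) ^ 2 := by
    unfold gsum
    exact Finset.sum_congr rfl fun i hi => by
      rw [hv.2.1 i (by have := (Finset.mem_Ico.mp hi).2; omega)]
  have hKt0b : ksum v (Finset.Ico (k+1) (n+1)) 0
      = ∑ i ∈ Finset.Ico (k+1) (n+1), (b i) ^ 2 := by
    unfold ksum
    exact Finset.sum_congr rfl fun i hi => by
      rw [hv.2.2.1 i (by have := (Finset.mem_Ico.mp hi).2; omega)]
  have hRkle : ∑ i ∈ Finset.Ico (k+1) (n+1), ((b i) ^ 2 + (lam i) ^ 2 * (a i) ^ 2)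
      ≤ Rk lam a b k := by
    have hfs : Summable (fun i => if k < i then (b i) ^ 2 + (lam i) ^ 2 * (a i) ^ 2 else 0) := by
      apply hab.of_nonneg_of_le
      · intro i; split <;> positivity
      · intro i; split
        · exact le_rfl
        · positivity
    have h := Summable.sum_le_tsum (Finset.Ico (k+1) (n+1))
      (fun i _ => by split <;> positivity) hfs
    unfold Rk
    refine le_trans (le_of_eq ?_) h
    exact Finset.sum_congr rfl fun i hi => by
      rw [if_pos (by have := (Finset.mem_Ico.mp hi).1; omega)]
  have hF0init : ksum v (Finset.Ico (k+1) (n+1)) 0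
      + (Mfun m (gsum lam v (Finset.range (n+1)) 0)
          - Mfun m (gsum lam v (Finset.range (k+1)) 0))
      ≤ max 1 μ₂ * Rk lam a b k := by
    have hMd := mfun_diff_le hmc hm_ub (gsum_nonneg lam v (Finset.range (k+1)) 0) (hAsub 0)
    have hsp := gsum_split lam v hkn 0
    have step1 : ksum v (Finset.Ico (k+1) (n+1)) 0
        + (Mfun m (gsum lam v (Finset.range (n+1)) 0)
            - Mfun m (gsum lam v (Finset.range (k+1)) 0))
        ≤ (∑ i ∈ Finset.Ico (k+1) (n+1), (b i) ^ 2)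
          + μ₂ * ∑ i ∈ Finset.Ico (k+1) (n+1), (lam i) ^ 2 * (a i) ^ 2 := by
      rw [hKt0b]
      have : gsum lam v (Finset.range (n+1)) 0 - gsum lam v (Finset.range (k+1)) 0
          = ∑ i ∈ Finset.Ico (k+1) (n+1), (lam i) ^ 2 * (a i) ^ 2 := by
        rw [← hB0a]; linarith
      rw [this] at hMd
      linarith
    have step2 : (∑ i ∈ Finset.Ico (k+1) (n+1), (b i) ^ 2)
        + μ₂ * ∑ i ∈ Finset.Ico (k+1) (n+1), (lam i) ^ 2 * (a i) ^ 2
        ≤ max 1 μ₂ * ∑ i ∈ Finset.Ico (k+1) (n+1), ((b i) ^ 2 + (lam i) ^ 2 * (a i) ^ 2) := by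
      rw [Finset.mul_sum, Finset.mul_sum, ← Finset.sum_add_distrib]
      apply Finset.sum_le_sum
      intro i _
      have h1 : (1:ℝ) ≤ max 1 μ₂ := le_max_left _ _
      have h2 : μ₂ ≤ max 1 μ₂ := le_max_right _ _
      nlinarith [mul_nonneg (sub_nonneg.mpr h1) (sq_nonneg (b i)),
        mul_nonneg (sub_nonneg.mpr h2) (mul_nonneg (sq_nonneg (lam i)) (sq_nonneg (a i)))]
    have step3 : max 1 μ₂ * ∑ i ∈ Finset.Ico (k+1) (n+1), ((b i) ^ 2 + (lam i) ^ 2 * (a i) ^ 2)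
        ≤ max 1 μ₂ * Rk lam a b k :=
      mul_le_mul_of_nonneg_left hRkle (le_trans zero_le_one (le_max_left 1 μ₂))
    linarith
  -- conclusion via Gronwall
  intro t ht
  refine ⟨hσle t ht, ?_⟩
  have hsμ : 0 < Real.sqrt μ₁ := Real.sqrt_pos.mpr hμ₁
  have hν₁sq : (min 1 μ₁) ^ 2 ≤ μ₁ * Real.sqrt μ₁ := by
    have h1 : min 1 μ₁ ≤ μ₁ := min_le_right _ _
    have h2 : min 1 μ₁ ≤ Real.sqrt μ₁ := min_le_sqrt hμ₁
    calc (min 1 μ₁) ^ 2 = min 1 μ₁ * min 1 μ₁ := sq (min 1 μ₁)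
      _ ≤ μ₁ * Real.sqrt μ₁ := mul_le_mul h1 h2 hν₁pos.le hμ₁.le
  set C := L * H0 lam m a b * lam k / (min 1 μ₁) ^ 2 with hC
  have hbnd : ∀ s, 0 ≤ s →
      |(m (gsum lam v (Finset.range (n+1)) s) - m (gsum lam v (Finset.range (k+1)) s))
        * gder lam v (Finset.range (k+1)) s|
      ≤ C * (ksum v (Finset.Ico (k+1) (n+1)) s
            + (Mfun m (gsum lam v (Finset.range (n+1)) s)
                - Mfun m (gsum lam v (Finset.range (k+1)) s))) := by
    intro s hs
    have hsp : gsum lam v (Finset.range (n+1)) s - gsum lam v (Finset.range (k+1)) s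
        = gsum lam v (Finset.Ico (k+1) (n+1)) s := by
      have := gsum_split lam v hkn s
      linarith
    have hΔ : |m (gsum lam v (Finset.range (n+1)) s) - m (gsum lam v (Finset.range (k+1)) s)|
        ≤ L * gsum lam v (Finset.Ico (k+1) (n+1)) s := by
      have h := hm_lip (gsum lam v (Finset.range (k+1)) s) (gsum lam v (Finset.range (n+1)) s)
        (gsum_nonneg _ _ _ _) (gsum_nonneg _ _ _ _)
      rwa [abs_of_nonneg (sub_nonneg.mpr (hAsub s)), hsp] at h
    have hg := hAd s hs
    have hB0s := gsum_nonneg lam v (Finset.Ico (k+1) (n+1)) s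
    have hFv0 := hFpos s
    have hDF := hFlb s
    have key : gsum lam v (Finset.Ico (k+1) (n+1)) s * (min 1 μ₁) ^ 2
        ≤ (ksum v (Finset.Ico (k+1) (n+1)) s
            + (Mfun m (gsum lam v (Finset.range (n+1)) s)
                - Mfun m (gsum lam v (Finset.range (k+1)) s))) * Real.sqrt μ₁ := by
      nlinarith [mul_le_mul_of_nonneg_right hDF hsμ.le,
        mul_le_mul_of_nonneg_left hν₁sq hB0s]
    rw [abs_mul]
    calc |m (gsum lam v (Finset.range (n+1)) s) - m (gsum lam v (Finset.range (k+1)) s)|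
          * |gder lam v (Finset.range (k+1)) s|
        ≤ (L * gsum lam v (Finset.Ico (k+1) (n+1)) s)
            * (lam k * (H0 lam m a b / Real.sqrt μ₁)) :=
          mul_le_mul hΔ hg (abs_nonneg _) (mul_nonneg hL.le hB0s)
      _ = (L * lam k * H0 lam m a b)
            * (gsum lam v (Finset.Ico (k+1) (n+1)) s / Real.sqrt μ₁) := by ring
      _ ≤ (L * lam k * H0 lam m a b)
            * ((ksum v (Finset.Ico (k+1) (n+1)) s
                + (Mfun m (gsum lam v (Finset.range (n+1)) s)
                    - Mfun m (gsum lam v (Finset.range (k+1)) s))) / (min 1 μ₁) ^ 2) := by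
          apply mul_le_mul_of_nonneg_left ?_
            (mul_nonneg (mul_nonneg hL.le (hpos k).le) hH)
          rw [div_le_div_iff₀ hsμ (by positivity)]
          linarith [key]
      _ = C * (ksum v (Finset.Ico (k+1) (n+1)) s
            + (Mfun m (gsum lam v (Finset.range (n+1)) s)
                - Mfun m (gsum lam v (Finset.range (k+1)) s))) := by
          rw [hC]; ring
  have hcont : ContinuousOn (fun s => ksum v (Finset.Ico (k+1) (n+1)) s
      + (Mfun m (gsum lam v (Finset.range (n+1)) s)
          - Mfun m (gsum lam v (Finset.range (k+1)) s))) (Set.Icc 0 t) :=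
    fun r hr => ((F_hasDeriv hmc hv hkn hr.1).continuousWithinAt).mono Icc_subset_Ici_self
  have hder : ∀ x ∈ Set.Ico 0 t,
      HasDerivWithinAt (fun s => ksum v (Finset.Ico (k+1) (n+1)) s
        + (Mfun m (gsum lam v (Finset.range (n+1)) s)
            - Mfun m (gsum lam v (Finset.range (k+1)) s)))
        ((fun s => (m (gsum lam v (Finset.range (n+1)) s)
            - m (gsum lam v (Finset.range (k+1)) s))
          * gder lam v (Finset.range (k+1)) s) x) (Set.Ici x) x :=
    fun x hx => (F_hasDeriv hmc hv hkn hx.1).mono (Ici_subset_Ici.mpr hx.1)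
  have hG := norm_le_gronwallBound_of_norm_deriv_right_le (a := 0) (b := t)
      (δ := ksum v (Finset.Ico (k+1) (n+1)) 0
        + (Mfun m (gsum lam v (Finset.range (n+1)) 0)
            - Mfun m (gsum lam v (Finset.range (k+1)) 0)))
      (K := C) (ε := 0)
      hcont hder
      (by simp only [Real.norm_eq_abs]; rw [abs_of_nonneg (hFpos 0)])
      (fun x hx => by
        simp only [Real.norm_eq_abs, add_zero]
        rw [abs_of_nonneg (hFpos x)]
        exact hbnd x hx.1)
      t ⟨ht, le_rfl⟩
  simp only [Real.norm_eq_abs, sub_zero, gronwallBound_ε0] at hG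
  rw [abs_of_nonneg (hFpos t)] at hG
  have h1 : μ₁ * gsum lam v (Finset.Ico (k+1) (n+1)) t
      ≤ (max 1 μ₂ * Rk lam a b k) * Real.exp (C * t) :=
    le_trans (hFlb t) (le_trans hG (mul_le_mul_of_nonneg_right hF0init (Real.exp_nonneg _)))
  rw [show L * H0 lam m a b * lam k * t / (min 1 μ₁) ^ 2 = C * t from by rw [hC]; ring]
  have hB0t := gsum_nonneg lam v (Finset.Ico (k+1) (n+1)) t
  rw [show Rk lam a b k * (max 1 μ₂ / min 1 μ₁ * Real.exp (C * t))
      = (max 1 μ₂ * Rk lam a b k * Real.exp (C * t)) / min 1 μ₁ from by ring]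
  rw [le_div_iff₀ hν₁pos]
  have h2 : gsum lam v (Finset.Ico (k+1) (n+1)) t * min 1 μ₁
      ≤ gsum lam v (Finset.Ico (k+1) (n+1)) t * μ₁ :=
    mul_le_mul_of_nonneg_left (min_le_right 1 μ₁) hB0t
  linarith [h1]

end aux

set_option maxHeartbeats 1000000 in
/-- estimate for the difference of the nonlinear coefficients of two
Galerkin approximations of orders n > k and m' > k. -/
theorem stmt11 (lam : ℕ → ℝ) (hpos : ∀ i, 0 < lam i) (hmono : Monotone lam)
    (htop : Tendsto lam atTop atTop)
    (μ₁ μ₂ L : ℝ) (hμ₁ : 0 < μ₁) (hL : 0 < L) (m : ℝ → ℝ)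
    (hm_reg : ContDiffOn ℝ 1 m (Set.Ici 0))
    (hm_lb : ∀ σ, 0 ≤ σ → μ₁ ≤ m σ) (hm_ub : ∀ σ, 0 ≤ σ → m σ ≤ μ₂)
    (hm_lip : ∀ σ₁ σ₂, 0 ≤ σ₁ → 0 ≤ σ₂ → |m σ₂ - m σ₁| ≤ L * |σ₂ - σ₁|)
    (a b : ℕ → ℝ) (hab : InEnergy lam a b)
    (k n m' : ℕ) (hk : 0 < k) (hkn : k < n) (hkm : k < m')
    (v w : ℕ → ℝ → ℝ)
    (hv : GalerkinSol lam m a b n v) (hw : GalerkinSol lam m a b m' w) :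
    ∀ t, 0 ≤ t →
      |(∑ i ∈ Finset.range (m' + 1), (lam i) ^ 2 * (w i t) ^ 2)
          - (∑ i ∈ Finset.range (n + 1), (lam i) ^ 2 * (v i t) ^ 2)|
        ≤ 2 * Real.sqrt (H0 lam m a b / min 1 μ₁)
            * Real.sqrt (∑ i ∈ Finset.range (k + 1), (lam i) ^ 2 * (v i t - w i t) ^ 2)
          + 2 * Rk lam a b k *
            ((max 1 μ₂ / min 1 μ₁)
              * Real.exp (L * H0 lam m a b * lam k * t / (min 1 μ₁) ^ 2)) := by
  intro t ht
  have hmc : ContinuousOn m (Set.Ici 0) := hm_reg.continuousOn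
  have hH : 0 ≤ H0 lam m a b := H0_nonneg hmc hμ₁ hm_lb
  have hν₁pos : (0:ℝ) < min 1 μ₁ := lt_min one_pos hμ₁
  have hν₁μ : min 1 μ₁ ≤ μ₁ := min_le_right _ _
  obtain ⟨hσv, hBv⟩ := galerkin_bounds lam hpos hmono μ₁ μ₂ L hμ₁ hL m hm_reg hm_lb hm_ub
    hm_lip a b hab k n hkn v hv t ht
  obtain ⟨hσw, hBw⟩ := galerkin_bounds lam hpos hmono μ₁ μ₂ L hμ₁ hL m hm_reg hm_lb hm_ub
    hm_lip a b hab k m' hkm w hw t ht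
  have e1 : (∑ i ∈ Finset.range (m' + 1), (lam i) ^ 2 * (w i t) ^ 2)
      = gsum lam w (Finset.range (m'+1)) t := rfl
  have e2 : (∑ i ∈ Finset.range (n + 1), (lam i) ^ 2 * (v i t) ^ 2)
      = gsum lam v (Finset.range (n+1)) t := rfl
  rw [e1, e2, gsum_split lam w hkm t, gsum_split lam v hkn t]
  have hHdiv : H0 lam m a b / μ₁ ≤ H0 lam m a b / min 1 μ₁ :=
    div_le_div_of_nonneg_left hH hν₁pos hν₁μ
  have hAv : gsum lam v (Finset.range (k+1)) t ≤ H0 lam m a b / min 1 μ₁ := by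
    have h1 : gsum lam v (Finset.range (k+1)) t ≤ gsum lam v (Finset.range (n+1)) t := by
      rw [gsum_split lam v hkn t]
      linarith [gsum_nonneg lam v (Finset.Ico (k+1) (n+1)) t]
    linarith
  have hAw : gsum lam w (Finset.range (k+1)) t ≤ H0 lam m a b / min 1 μ₁ := by
    have h1 : gsum lam w (Finset.range (k+1)) t ≤ gsum lam w (Finset.range (m'+1)) t := by
      rw [gsum_split lam w hkm t]
      linarith [gsum_nonneg lam w (Finset.Ico (k+1) (m'+1)) t]
    linarith
  -- Cauchy-Schwarz bound for the low-frequency difference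
  have hlow : |gsum lam w (Finset.range (k+1)) t - gsum lam v (Finset.range (k+1)) t|
      ≤ 2 * Real.sqrt (H0 lam m a b / min 1 μ₁)
        * Real.sqrt (∑ i ∈ Finset.range (k + 1), (lam i) ^ 2 * (v i t - w i t) ^ 2) := by
    have hstep1 : gsum lam w (Finset.range (k+1)) t - gsum lam v (Finset.range (k+1)) t
        = ∑ j ∈ Finset.range (k+1),
            (lam j * (v j t - w j t)) * (-(lam j * (w j t + v j t))) := by
      unfold gsum
      rw [← Finset.sum_sub_distrib]
      exact Finset.sum_congr rfl fun j _ => by ring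
    have habs : |gsum lam w (Finset.range (k+1)) t - gsum lam v (Finset.range (k+1)) t|
        ≤ ∑ j ∈ Finset.range (k+1),
            |lam j * (v j t - w j t)| * |lam j * (w j t + v j t)| := by
      rw [hstep1]
      refine (Finset.abs_sum_le_sum_abs _ _).trans ?_
      apply Finset.sum_le_sum
      intro j _
      rw [abs_mul, abs_neg]
    have hCS : (∑ j ∈ Finset.range (k+1),
          |lam j * (v j t - w j t)| * |lam j * (w j t + v j t)|)
        ≤ Real.sqrt (∑ i ∈ Finset.range (k + 1), (lam i) ^ 2 * (v i t - w i t) ^ 2)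
          * Real.sqrt (∑ i ∈ Finset.range (k + 1), (lam i) ^ 2 * (w i t + v i t) ^ 2) := by
      have h := Finset.sum_mul_sq_le_sq_mul_sq (Finset.range (k+1))
        (fun j => |lam j * (v j t - w j t)|) (fun j => |lam j * (w j t + v j t)|)
      have hsq : ∑ j ∈ Finset.range (k+1), |lam j * (v j t - w j t)| ^ 2
          = ∑ i ∈ Finset.range (k + 1), (lam i) ^ 2 * (v i t - w i t) ^ 2 :=
        Finset.sum_congr rfl fun j _ => by rw [sq_abs, mul_pow]
      have hsq2 : ∑ j ∈ Finset.range (k+1), |lam j * (w j t + v j t)| ^ 2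
          = ∑ i ∈ Finset.range (k + 1), (lam i) ^ 2 * (w i t + v i t) ^ 2 :=
        Finset.sum_congr rfl fun j _ => by rw [sq_abs, mul_pow]
      rw [hsq, hsq2] at h
      have hnn : 0 ≤ ∑ j ∈ Finset.range (k+1),
          |lam j * (v j t - w j t)| * |lam j * (w j t + v j t)| :=
        Finset.sum_nonneg fun j _ => mul_nonneg (abs_nonneg _) (abs_nonneg _)
      calc (∑ j ∈ Finset.range (k+1),
            |lam j * (v j t - w j t)| * |lam j * (w j t + v j t)|)
          = Real.sqrt ((∑ j ∈ Finset.range (k+1),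
              |lam j * (v j t - w j t)| * |lam j * (w j t + v j t)|) ^ 2) :=
            (Real.sqrt_sq hnn).symm
        _ ≤ Real.sqrt ((∑ i ∈ Finset.range (k + 1), (lam i) ^ 2 * (v i t - w i t) ^ 2)
              * ∑ i ∈ Finset.range (k + 1), (lam i) ^ 2 * (w i t + v i t) ^ 2) :=
            Real.sqrt_le_sqrt h
        _ = _ := Real.sqrt_mul (Finset.sum_nonneg fun j _ => by positivity) _
    have hS : (∑ i ∈ Finset.range (k + 1), (lam i) ^ 2 * (w i t + v i t) ^ 2)
        ≤ 4 * (H0 lam m a b / min 1 μ₁) := by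
      have h1 : (∑ i ∈ Finset.range (k + 1), (lam i) ^ 2 * (w i t + v i t) ^ 2)
          ≤ 2 * gsum lam v (Finset.range (k+1)) t + 2 * gsum lam w (Finset.range (k+1)) t := by
        unfold gsum
        rw [Finset.mul_sum, Finset.mul_sum, ← Finset.sum_add_distrib]
        apply Finset.sum_le_sum
        intro i _
        nlinarith [sq_nonneg (w i t - v i t), sq_nonneg (lam i)]
      linarith
    have hsqrtS : Real.sqrt (∑ i ∈ Finset.range (k + 1), (lam i) ^ 2 * (w i t + v i t) ^ 2)
        ≤ 2 * Real.sqrt (H0 lam m a b / min 1 μ₁) := by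
      refine (Real.sqrt_le_sqrt hS).trans ?_
      rw [show (4:ℝ) * (H0 lam m a b / min 1 μ₁) = 2 ^ 2 * (H0 lam m a b / min 1 μ₁) from by ring,
        Real.sqrt_mul (by positivity), Real.sqrt_sq (by norm_num : (0:ℝ) ≤ 2)]
    calc |gsum lam w (Finset.range (k+1)) t - gsum lam v (Finset.range (k+1)) t|
        ≤ ∑ j ∈ Finset.range (k+1),
            |lam j * (v j t - w j t)| * |lam j * (w j t + v j t)| := habs
      _ ≤ Real.sqrt (∑ i ∈ Finset.range (k + 1), (lam i) ^ 2 * (v i t - w i t) ^ 2)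
          * Real.sqrt (∑ i ∈ Finset.range (k + 1), (lam i) ^ 2 * (w i t + v i t) ^ 2) := hCS
      _ ≤ Real.sqrt (∑ i ∈ Finset.range (k + 1), (lam i) ^ 2 * (v i t - w i t) ^ 2)
          * (2 * Real.sqrt (H0 lam m a b / min 1 μ₁)) :=
          mul_le_mul_of_nonneg_left hsqrtS (Real.sqrt_nonneg _)
      _ = 2 * Real.sqrt (H0 lam m a b / min 1 μ₁)
          * Real.sqrt (∑ i ∈ Finset.range (k + 1), (lam i) ^ 2 * (v i t - w i t) ^ 2) := by
          ring
  -- assemble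
  have hBw0 := gsum_nonneg lam w (Finset.Ico (k+1) (m'+1)) t
  have hBv0 := gsum_nonneg lam v (Finset.Ico (k+1) (n+1)) t
  rw [show gsum lam w (Finset.range (k+1)) t + gsum lam w (Finset.Ico (k+1) (m'+1)) t
      - (gsum lam v (Finset.range (k+1)) t + gsum lam v (Finset.Ico (k+1) (n+1)) t)
      = (gsum lam w (Finset.range (k+1)) t - gsum lam v (Finset.range (k+1)) t)
        + (gsum lam w (Finset.Ico (k+1) (m'+1)) t - gsum lam v (Finset.Ico (k+1) (n+1)) t)
      from by ring]
  have htri := abs_add_le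
    (gsum lam w (Finset.range (k+1)) t - gsum lam v (Finset.range (k+1)) t)
    (gsum lam w (Finset.Ico (k+1) (m'+1)) t - gsum lam v (Finset.Ico (k+1) (n+1)) t)
  have htail : |gsum lam w (Finset.Ico (k+1) (m'+1)) t - gsum lam v (Finset.Ico (k+1) (n+1)) t|
      ≤ gsum lam w (Finset.Ico (k+1) (m'+1)) t + gsum lam v (Finset.Ico (k+1) (n+1)) t :=
    abs_le.mpr ⟨by linarith, by linarith⟩
  linarith [htri, hlow, hBv, hBw]
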